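/- arXiv:0908.0533 — 3 statements merged into one kernel-verified Lean document; each statement's English description precedes it below -/
import Mathlib

section
/- Let f : ℤ_p → ℚ_p be given by a power series converging on ℤ_p that is not identically zero. Then f has only finitely many zeros in ℤ_p. -/
open Filter

namespace StrassmannAux

variable {p : ℕ} [Fact p.Prime]

lemma mul_pow_norm_le (c y : ℚ_[p]) (hy : ‖y‖ ≤ 1) (m : ℕ) : ‖c * y ^ m‖ ≤ ‖c‖ := by
  rw [norm_mul, norm_pow]
  exact mul_le_of_le_one_right (norm_nonneg c) (pow_le_one₀ (norm_nonneg y) hy)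

/-- For an ultrametric field with discrete valuation: a tsum whose terms are all strictly
smaller in norm than `‖x‖` is itself strictly smaller in norm. -/
lemma norm_tsum_lt {c : ℕ → ℚ_[p]} {x : ℚ_[p]} (hx : x ≠ 0) (h : ∀ m, ‖c m‖ < ‖x‖) :
    ‖∑' m, c m‖ < ‖x‖ := by
  have hp1 : (1 : ℝ) < (p : ℝ) := by exact_mod_cast (Fact.out : p.Prime).one_lt
  have hp0 : (0 : ℝ) < (p : ℝ) := lt_trans one_pos hp1
  rw [Padic.norm_eq_zpow_neg_valuation hx] at h ⊢
  have hb : ∀ m, ‖c m‖ ≤ (p : ℝ) ^ (-x.valuation - 1) :=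
    fun m => (Padic.norm_lt_pow_iff_norm_le_pow_sub_one _ _).mp (h m)
  refine lt_of_le_of_lt
    (IsUltrametricDist.norm_tsum_le_of_forall_le_of_nonneg (zpow_nonneg hp0.le _) hb) ?_
  exact zpow_lt_zpow_right₀ hp1 (by omega)

lemma summable_main (a : ℕ → ℚ_[p]) (ha : Tendsto a atTop (nhds 0)) (z : ℤ_[p]) :
    Summable (fun n => a n * (z : ℚ_[p]) ^ n) := by
  apply NonarchimedeanAddGroup.summable_of_tendsto_cofinite_zero
  rw [Nat.cofinite_eq_atTop]
  refine squeeze_zero_norm (fun n => ?_) (tendsto_zero_iff_norm_tendsto_zero.mp ha)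
  exact mul_pow_norm_le _ _ (by rw [← PadicInt.norm_def]; exact PadicInt.norm_le_one z) n

lemma exists_argmax (a : ℕ → ℚ_[p]) (ha : Tendsto a atTop (nhds 0)) {k : ℕ} (hk : a k ≠ 0) :
    ∃ N, a N ≠ 0 ∧ (∀ m, ‖a m‖ ≤ ‖a N‖) ∧ ∀ m, N < m → ‖a m‖ < ‖a N‖ := by
  have hk0 : 0 < ‖a k‖ := norm_pos_iff.mpr hk
  have hev := NormedAddCommGroup.tendsto_nhds_zero.mp ha ‖a k‖ hk0
  rw [eventually_atTop] at hev
  obtain ⟨K, hK⟩ := hev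
  have hkK : k < K := by
    by_contra h
    exact absurd (hK k (le_of_not_gt h)) (lt_irrefl _)
  obtain ⟨N0, hN0mem, hN0max⟩ := Finset.exists_max_image (Finset.range K) (fun n => ‖a n‖)
    ⟨k, Finset.mem_range.mpr hkK⟩
  have hglob : ∀ m, ‖a m‖ ≤ ‖a N0‖ := by
    intro m
    by_cases hm : m < K
    · exact hN0max m (Finset.mem_range.mpr hm)
    · exact le_trans (le_of_lt (hK m (le_of_not_gt hm))) (hN0max k (Finset.mem_range.mpr hkK))
  set T := (Finset.range K).filter (fun n => ‖a N0‖ ≤ ‖a n‖) with hT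
  have hN0T : N0 ∈ T := Finset.mem_filter.mpr ⟨hN0mem, le_refl _⟩
  have hTne : T.Nonempty := ⟨N0, hN0T⟩
  set N := T.max' hTne with hN
  have hNT : N ∈ T := T.max'_mem hTne
  have hNeq : ‖a N‖ = ‖a N0‖ :=
    le_antisymm (hglob N) (Finset.mem_filter.mp hNT).2
  have hak : ‖a k‖ ≤ ‖a N‖ := hNeq ▸ hglob k
  refine ⟨N, ?_, fun m => (hglob m).trans hNeq.ge, ?_⟩
  · exact norm_pos_iff.mp (lt_of_lt_of_le hk0 hak)
  · intro m hm
    by_contra h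
    push_neg at h
    have hmem : m ∈ T := by
      refine Finset.mem_filter.mpr ⟨Finset.mem_range.mpr ?_, hNeq ▸ h⟩
      by_contra hm2
      exact absurd (lt_of_lt_of_le (hK m (le_of_not_gt hm2)) (hak.trans h))
        (lt_irrefl _)
    exact absurd (Finset.le_max' T m hmem) (not_le.mpr hm)

/-- the coefficients of the quotient series after factoring out a root -/
noncomputable def shiftCoeff (a : ℕ → ℚ_[p]) (y : ℚ_[p]) (j : ℕ) : ℚ_[p] :=
  ∑' m, a (j + 1 + m) * y ^ m

lemma summable_shift (a : ℕ → ℚ_[p]) (ha : Tendsto a atTop (nhds 0)) {y : ℚ_[p]}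
    (hy : ‖y‖ ≤ 1) (j : ℕ) : Summable (fun m => a (j + 1 + m) * y ^ m) := by
  apply NonarchimedeanAddGroup.summable_of_tendsto_cofinite_zero
  rw [Nat.cofinite_eq_atTop]
  refine squeeze_zero_norm (fun m => mul_pow_norm_le _ _ hy m) ?_
  exact (tendsto_zero_iff_norm_tendsto_zero.mp ha).comp
    (tendsto_atTop_mono (fun m => Nat.le_add_left m (j + 1)) tendsto_id)

lemma shift_norm_le (a : ℕ → ℚ_[p]) {y : ℚ_[p]} (hy : ‖y‖ ≤ 1) {j : ℕ} {C : ℝ} (hC : 0 ≤ C)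
    (h : ∀ n, j < n → ‖a n‖ ≤ C) : ‖shiftCoeff a y j‖ ≤ C :=
  IsUltrametricDist.norm_tsum_le_of_forall_le_of_nonneg hC
    (fun m => (mul_pow_norm_le _ _ hy m).trans (h _ (by omega)))

lemma shift_norm_lt (a : ℕ → ℚ_[p]) {y x : ℚ_[p]} (hy : ‖y‖ ≤ 1) (hx : x ≠ 0) {j : ℕ}
    (h : ∀ n, j < n → ‖a n‖ < ‖x‖) : ‖shiftCoeff a y j‖ < ‖x‖ :=
  norm_tsum_lt hx (fun m => lt_of_le_of_lt (mul_pow_norm_le _ _ hy m) (h _ (by omega)))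

lemma shift_tendsto (a : ℕ → ℚ_[p]) (ha : Tendsto a atTop (nhds 0)) {y : ℚ_[p]}
    (hy : ‖y‖ ≤ 1) : Tendsto (shiftCoeff a y) atTop (nhds 0) := by
  rw [NormedAddCommGroup.tendsto_nhds_zero]
  intro ε hε
  have hev := NormedAddCommGroup.tendsto_nhds_zero.mp ha (ε / 2) (half_pos hε)
  rw [eventually_atTop] at hev
  obtain ⟨K, hK⟩ := hev
  rw [eventually_atTop]
  refine ⟨K, fun j hj => lt_of_le_of_lt (shift_norm_le a hy (by positivity)
    (fun n hn => (hK n (by omega)).le) : ‖shiftCoeff a y j‖ ≤ ε / 2) (by linarith)⟩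

/-- Factoring out a root of the power series. -/
lemma factor (a : ℕ → ℚ_[p]) (ha : Tendsto a atTop (nhds 0)) (z z1 : ℤ_[p])
    (h1 : ∑' n, a n * (z1 : ℚ_[p]) ^ n = 0) :
    ∑' n, a n * (z : ℚ_[p]) ^ n
      = ((z : ℚ_[p]) - (z1 : ℚ_[p]))
        * ∑' j, shiftCoeff a (z1 : ℚ_[p]) j * (z : ℚ_[p]) ^ j := by
  set x := (z : ℚ_[p]) with hxdef
  set y := (z1 : ℚ_[p]) with hydef
  have hx : ‖x‖ ≤ 1 := by rw [hxdef, ← PadicInt.norm_def]; exact PadicInt.norm_le_one z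
  have hy : ‖y‖ ≤ 1 := by rw [hydef, ← PadicInt.norm_def]; exact PadicInt.norm_le_one z1
  have hnorm : Tendsto (fun n => ‖a n‖) atTop (nhds 0) :=
    tendsto_zero_iff_norm_tendsto_zero.mp ha
  set u : ℕ × ℕ → ℚ_[p] := fun q => a (q.1 + 1 + q.2) * y ^ q.2 * x ^ q.1 with hu
  set v : ℕ × ℕ → ℚ_[p] :=
    fun q => if q.2 < q.1 then a q.1 * y ^ (q.1 - 1 - q.2) * x ^ q.2 else 0 with hv
  set J : ℕ × ℕ → ℕ × ℕ := fun q => (q.1 + 1 + q.2, q.1) with hJ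
  have hJinj : Function.Injective J := by
    intro q q' h
    rw [hJ, Prod.mk.injEq] at h
    exact Prod.ext (h.2) (by omega)
  have hvJ : ∀ q, v (J q) = u q := by
    rintro ⟨i, m⟩
    show (if i < i + 1 + m then a (i + 1 + m) * y ^ (i + 1 + m - 1 - i) * x ^ i else 0)
        = a (i + 1 + m) * y ^ m * x ^ i
    rw [if_pos (by omega)]
    have h2 : i + 1 + m - 1 - i = m := by omega
    rw [h2]
  have hvout : ∀ q ∉ Set.range J, v q = 0 := by
    intro q hq
    rw [hv]
    simp only
    rw [if_neg]
    intro hlt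
    exact hq ⟨(q.2, q.1 - 1 - q.2), by
      rw [hJ]; exact Prod.ext (by simp only; omega) rfl⟩
  have hmap : Tendsto (fun q : ℕ × ℕ => q.1 + 1 + q.2) cofinite atTop := by
    rw [tendsto_atTop]
    intro b
    rw [eventually_cofinite]
    apply Set.Finite.subset ((Set.finite_Iio b).prod (Set.finite_Iio b))
    intro q hq
    simp only [Set.mem_setOf_eq, not_le] at hq
    exact ⟨by simp only [Set.mem_Iio]; omega, by simp only [Set.mem_Iio]; omega⟩
  have hu_sum : Summable u := by
    apply NonarchimedeanAddGroup.summable_of_tendsto_cofinite_zero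
    refine squeeze_zero_norm (fun q => ?_) (hnorm.comp hmap)
    exact (mul_pow_norm_le _ _ hx q.1).trans (mul_pow_norm_le _ _ hy q.2)
  have hv_sum : Summable v := by
    rw [← hJinj.summable_iff hvout]
    exact hu_sum.congr (fun q => (hvJ q).symm)
  have hu_row : ∀ i, Summable fun m => u (i, m) := by
    intro i
    rw [hu]
    simp only
    exact (summable_shift a ha hy i).mul_right _
  have hv_row : ∀ n, Summable fun i => v (n, i) := by
    intro n
    apply summable_of_ne_finset_zero (s := Finset.range n)
    intro i hi
    rw [hv]
    simp only
    rw [if_neg]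
    simpa using hi
  have hA : Summable (fun n => a n * x ^ n) := summable_main a ha z
  have hA1 : Summable (fun n => a n * y ^ n) := summable_main a ha z1
  have e1 : ∑' n, a n * x ^ n = ∑' n, (a n * x ^ n - a n * y ^ n) := by
    rw [Summable.tsum_sub hA hA1, h1, sub_zero]
  have e2 : ∀ n : ℕ, a n * x ^ n - a n * y ^ n
      = (x - y) * ∑ i ∈ Finset.range n, a n * y ^ (n - 1 - i) * x ^ i := by
    intro n
    have hg := geom_sum₂_mul x y n
    calc a n * x ^ n - a n * y ^ n
        = a n * ((∑ i ∈ Finset.range n, x ^ i * y ^ (n - 1 - i)) * (x - y)) := by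
          rw [hg]; ring
      _ = (x - y) * ∑ i ∈ Finset.range n, a n * y ^ (n - 1 - i) * x ^ i := by
          simp only [Finset.mul_sum, Finset.sum_mul]
          exact Finset.sum_congr rfl fun i _ => by ring
  have e4 : ∑' q, v q = ∑' n, ∑ i ∈ Finset.range n, a n * y ^ (n - 1 - i) * x ^ i := by
    rw [Summable.tsum_prod' hv_sum hv_row]
    refine tsum_congr fun n => ?_
    rw [tsum_eq_sum (s := Finset.range n) (fun i hi => by
      rw [hv]; simp only; rw [if_neg]; simpa using hi)]
    refine Finset.sum_congr rfl fun i hi => ?_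
    rw [hv]
    simp only
    rw [if_pos (Finset.mem_range.mp hi)]
  have hsupp : Function.support v ⊆ Set.range J := by
    intro q hq
    by_contra h
    exact hq (hvout q h)
  have e5 : ∑' q, u q = ∑' q, v q := by
    rw [← hJinj.tsum_eq hsupp]
    exact tsum_congr (fun q => (hvJ q).symm)
  have e6 : ∑' q, u q = ∑' j, shiftCoeff a y j * x ^ j := by
    rw [Summable.tsum_prod' hu_sum hu_row]
    refine tsum_congr fun i => ?_
    rw [hu]
    simp only
    rw [tsum_mul_right]
    rfl
  rw [e1, tsum_congr e2, tsum_mul_left, ← e4, ← e5, e6]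

lemma key (N : ℕ) : ∀ a : ℕ → ℚ_[p], Tendsto a atTop (nhds 0) → a N ≠ 0 →
    (∀ m, ‖a m‖ ≤ ‖a N‖) → (∀ m, N < m → ‖a m‖ < ‖a N‖) →
    {z : ℤ_[p] | ∑' n, a n * (z : ℚ_[p]) ^ n = 0}.Finite := by
  induction N using Nat.strong_induction_on with
  | _ N ih =>
    match N, ih with
    | 0, _ =>
      intro a ha haN hmax hlast
      convert Set.finite_empty
      rw [Set.eq_empty_iff_forall_notMem]
      intro z hz
      rw [Set.mem_setOf_eq] at hz
      have hsum := summable_main a ha z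
      rw [Summable.tsum_eq_zero_add hsum, pow_zero, mul_one] at hz
      have hR : ‖∑' n : ℕ, a (n + 1) * (z : ℚ_[p]) ^ (n + 1)‖ < ‖a 0‖ := by
        refine norm_tsum_lt haN (fun m => lt_of_le_of_lt ?_ (hlast _ (Nat.succ_pos m)))
        exact mul_pow_norm_le _ _ (by rw [← PadicInt.norm_def]; exact PadicInt.norm_le_one z) _
      rw [eq_neg_of_add_eq_zero_right hz, norm_neg] at hR
      exact lt_irrefl _ hR
    | (N + 1), ih =>
      intro a ha haN hmax hlast
      rcases Set.eq_empty_or_nonempty {z : ℤ_[p] | ∑' n, a n * (z : ℚ_[p]) ^ n = 0} with h | h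
      · rw [h]; exact Set.finite_empty
      obtain ⟨z1, hz1⟩ := h
      rw [Set.mem_setOf_eq] at hz1
      set y := (z1 : ℚ_[p]) with hydef
      have hy : ‖y‖ ≤ 1 := by rw [hydef, ← PadicInt.norm_def]; exact PadicInt.norm_le_one z1
      set b := shiftCoeff a y with hb
      have hb0 : Tendsto b atTop (nhds 0) := shift_tendsto a ha hy
      -- b N = a (N+1) + R with ‖R‖ < ‖a (N+1)‖
      have hbN : ‖a (N + 1)‖ ≤ ‖b N‖ := by
        have hsum := summable_shift a ha hy N
        have hsplit : b N = a (N + 1) + ∑' m : ℕ, a (N + 1 + (m + 1)) * y ^ (m + 1) := by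
          rw [hb, shiftCoeff, Summable.tsum_eq_zero_add hsum]
          simp
        have hR : ‖∑' m : ℕ, a (N + 1 + (m + 1)) * y ^ (m + 1)‖ < ‖a (N + 1)‖ := by
          refine norm_tsum_lt haN (fun m => lt_of_le_of_lt (mul_pow_norm_le _ _ hy _) ?_)
          exact hlast _ (by omega)
        by_contra hcon
        push_neg at hcon
        have := IsUltrametricDist.norm_add_le_max (b N)
          (-(∑' m : ℕ, a (N + 1 + (m + 1)) * y ^ (m + 1)))
        rw [norm_neg] at this
        have hba : b N + -(∑' m : ℕ, a (N + 1 + (m + 1)) * y ^ (m + 1)) = a (N + 1) := by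
          rw [hsplit]; ring
        rw [hba] at this
        rcases max_cases ‖b N‖ ‖∑' m : ℕ, a (N + 1 + (m + 1)) * y ^ (m + 1)‖ with
          ⟨he, _⟩ | ⟨he, _⟩ <;> rw [he] at this
        · exact absurd (lt_of_le_of_lt this hcon) (lt_irrefl _)
        · exact absurd (lt_of_le_of_lt this hR) (lt_irrefl _)
      have hbne : b N ≠ 0 := by
        intro h0
        rw [h0, norm_zero] at hbN
        exact haN (norm_le_zero_iff.mp hbN)
      obtain ⟨N', hN'ne, hN'max, hN'last⟩ := exists_argmax b hb0 hbne
      have hbg : ∀ j, N < j → ‖b j‖ < ‖a (N + 1)‖ := by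
        intro j hj
        exact shift_norm_lt a hy haN (fun n hn => hlast n (by omega))
      have hN'lt : N' < N + 1 := by
        by_contra hcon
        push_neg at hcon
        rcases lt_or_eq_of_le hcon with hlt | heq
        · have h1 : ‖b N‖ ≤ ‖b N'‖ := hN'max N
          have h2 : ‖b N'‖ < ‖a (N + 1)‖ := hbg N' (by omega)
          exact absurd (lt_of_le_of_lt (hbN.trans h1) h2) (lt_irrefl _)
        · have h2 : ‖b N'‖ < ‖a (N + 1)‖ := hbg N' (by omega)
          exact absurd (lt_of_le_of_lt (hbN.trans (hN'max N)) h2) (lt_irrefl _)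
      have hfin' := ih N' hN'lt b hb0 hN'ne hN'max hN'last
      apply Set.Finite.subset (hfin'.insert z1)
      intro z hz
      rw [Set.mem_setOf_eq] at hz
      by_cases hzz : z = z1
      · exact Set.mem_insert_iff.mpr (Or.inl hzz)
      · refine Set.mem_insert_iff.mpr (Or.inr ?_)
        rw [Set.mem_setOf_eq]
        have hf := factor a ha z z1 hz1
        rw [hz] at hf
        have hxy : (z : ℚ_[p]) - (z1 : ℚ_[p]) ≠ 0 := by
          rw [sub_ne_zero]
          exact fun h => hzz (Subtype.coe_injective h)
        rcases mul_eq_zero.mp hf.symm with h | h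
        · exact absurd h hxy
        · exact h

end StrassmannAux

/-- A function on `ℤ_p` given by a power series `∑ aₙ zⁿ` with `aₙ ∈ ℚ_p`, `aₙ → 0`
(hence converging on all of `ℤ_p`), not all coefficients zero, has only finitely many
zeros in `ℤ_p`. -/
theorem padic_power_series_finitely_many_zeros (p : ℕ) [Fact p.Prime]
    (a : ℕ → ℚ_[p]) (ha : Filter.Tendsto a Filter.atTop (nhds 0))
    (hne : ∃ n, a n ≠ 0) :
    {z : ℤ_[p] | ∑' n : ℕ, a n * (z : ℚ_[p]) ^ n = 0}.Finite := by
  obtain ⟨k, hk⟩ := hne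
  obtain ⟨N, hN, hmax, hlast⟩ := StrassmannAux.exists_argmax a ha hk
  exact StrassmannAux.key N a ha hN hmax hlast
end

section
/- Let F, G, H : C → Set be functors with Isom(F,G) and Isom(F,H) nonempty. Then every isomorphism of right Aut(F)-sets Isom(F,G) ≅ Isom(F,H) is induced by composition with a unique natural isomorphism G ≅ H. -/
open CategoryTheory

/-- Any isomorphism of right `Aut(F)`-sets `Isom(F,G) ≅ Isom(F,H)` is induced by
composition with a unique natural isomorphism `G ≅ H`. -/
theorem autEquivariant_bijection_isom_induced_by_iso {C : Type u} [Category.{v} C]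
    (F G H : C ⥤ Type w) (hG : Nonempty (F ≅ G)) (hH : Nonempty (F ≅ H))
    (Φ : (F ≅ G) ≃ (F ≅ H))
    (hΦ : ∀ (g : F ≅ F) (φ : F ≅ G), Φ (g ≪≫ φ) = g ≪≫ Φ φ) :
    ∃! h : G ≅ H, ∀ φ : F ≅ G, Φ φ = φ ≪≫ h := by
  obtain ⟨φ₀⟩ := hG
  refine ⟨φ₀.symm ≪≫ Φ φ₀, fun φ => ?_, fun h' hh' => ?_⟩
  · have : φ = (φ ≪≫ φ₀.symm) ≪≫ φ₀ := by ext X x; simp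
    rw [this, hΦ]
    ext X x
    simp
  · have := hh' φ₀
    ext X x
    simp [this]
end

section
/- With L = V ⊕ Z a 2-step nilpotent Lie algebra as above with BCH group law, the formula λ · (ξ₁, ξ₂) = (λξ₁, λ²ξ₂) for λ a scalar defines an action of the multiplicative monoid of the base field on the set of 1-cocycles G → L, i.e., if (ξ₁, ξ₂) is a cocycle then so is (λξ₁, λ²ξ₂). -/
/-- The Baker–Campbell–Hausdorff product `u * v = u + v + ½[u,v]` on the 2-step nilpotent
Lie algebra `L = V ⊕ Z`. -/
def bchProd {k V Z : Type*} [Field k] [AddCommGroup V] [Module k V]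
    [AddCommGroup Z] [Module k Z] (B : V →ₗ[k] V →ₗ[k] Z) (u v : V × Z) : V × Z :=
  (u.1 + v.1, u.2 + v.2 + (1 / 2 : k) • B u.1 v.1)

/-- The formula `λ · (ξ₁, ξ₂) = (λξ₁, λ²ξ₂)` preserves the set of 1-cocycles of `G` with
values in the BCH group `L = V ⊕ Z`, so defines an action of the multiplicative monoid of
the base field on cocycles. -/
theorem bch_cocycle_scalar_action {k V Z G : Type*} [Field k] [CharZero k]
    [AddCommGroup V] [Module k V] [AddCommGroup Z] [Module k Z] [Group G]
    [DistribMulAction G V] [DistribMulAction G Z]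
    [SMulCommClass G k V] [SMulCommClass G k Z]
    (B : V →ₗ[k] V →ₗ[k] Z)
    (hBequiv : ∀ (g : G) (v w : V), g • (B v w) = B (g • v) (g • w))
    (ξ₁ : G → V) (ξ₂ : G → Z)
    (hcocycle : ∀ g h : G, (ξ₁ (g * h), ξ₂ (g * h)) =
        bchProd B (ξ₁ g, ξ₂ g) (g • ξ₁ h, g • ξ₂ h))
    (lam : k) :
    ∀ g h : G, (lam • ξ₁ (g * h), (lam ^ 2) • ξ₂ (g * h)) =
      bchProd B (lam • ξ₁ g, (lam ^ 2) • ξ₂ g)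
        (g • (lam • ξ₁ h), g • ((lam ^ 2) • ξ₂ h)) := by
  intro g h
  have h1 : ξ₁ (g * h) = ξ₁ g + g • ξ₁ h := congrArg Prod.fst (hcocycle g h)
  have h2 : ξ₂ (g * h) = ξ₂ g + g • ξ₂ h + (1 / 2 : k) • B (ξ₁ g) (g • ξ₁ h) :=
    congrArg Prod.snd (hcocycle g h)
  simp only [bchProd, Prod.mk.injEq, h1, h2, smul_add, smul_comm g lam,
    smul_comm g (lam ^ 2 : k), map_smul, LinearMap.smul_apply]
  refine ⟨trivial, ?_⟩
  rw [smul_smul, mul_comm]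
  rw [smul_smul, smul_smul]
  ring_nf
end
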